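/- Let d, n be positive integers, let U_K, U_Q ⊂ ℝ^{d×n} be compact, let f : U_K × U_Q → ℝ^{d×n} be continuous, and let ε > 0. Then there exist two sum-of-linear-transformations layers Linear_K, Linear_Q and a single-head cross-attention layer Attn with weight matrices W_K, W_Q, W_V, W_O of suitable dimensions such that for all Z_K ∈ U_K and Z_Q ∈ U_Q: ‖W_V·Linear_K(Z_K) · Softmax((W_K·Linear_K(Z_K))ᵀ · W_Q·Linear_Q(Z_Q)) · W_O − f(Z_K, Z_Q)‖_∞ ≤ ε. -/

import Mathlib

open Matrix

/-- Column-wise softmax of a real matrix. -/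
noncomputable def softmax {a b : ℕ} (M : Matrix (Fin a) (Fin b) ℝ) :
    Matrix (Fin a) (Fin b) ℝ :=
  Matrix.of fun i j => Real.exp (M i j) / ∑ k, Real.exp (M k j)



abbrev MatF (d n : ℕ) := Fin d → Fin n → ℝ

noncomputable def sqd {d n : ℕ} (x y : MatF d n) : ℝ := ∑ a, ∑ b, (x a b - y a b)^2

noncomputable def Gf {d n : ℕ} (k x : MatF d n) : ℝ :=
  (∑ a, ∑ b, 2 * k a b * x a b) - ∑ a, ∑ b, (k a b)^2

lemma sqd_nonneg {d n : ℕ} (x y : MatF d n) : 0 ≤ sqd x y :=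
  Finset.sum_nonneg fun _ _ => Finset.sum_nonneg fun _ _ => sq_nonneg _

lemma Gf_eq {d n : ℕ} (k x : MatF d n) :
    Gf k x = (∑ a, ∑ b, (x a b)^2) - sqd x k := by
  unfold Gf sqd
  simp only [← Finset.sum_sub_distrib]
  exact Finset.sum_congr rfl fun a _ => Finset.sum_congr rfl fun b _ => by ring

lemma Gf_sub {d n : ℕ} (k k' x : MatF d n) :
    Gf k x - Gf k' x = sqd x k' - sqd x k := by
  rw [Gf_eq k x, Gf_eq k' x]; ring

lemma sqd_le_of_dist_le {d n : ℕ} (x y : MatF d n) {ρ : ℝ} (h : dist x y ≤ ρ) (hρ : 0 ≤ ρ) :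
    sqd x y ≤ (d : ℝ) * (n : ℝ) * ρ^2 := by
  have hb : ∀ (a : Fin d) (b : Fin n), (x a b - y a b)^2 ≤ ρ^2 := by
    intro a b
    have h1 : dist (x a b) (y a b) ≤ ρ :=
      le_trans (le_trans (dist_le_pi_dist (x a) (y a) b) (dist_le_pi_dist x y a)) h
    rw [Real.dist_eq] at h1
    calc (x a b - y a b)^2 = |x a b - y a b|^2 := (sq_abs _).symm
    _ ≤ ρ^2 := by nlinarith [abs_nonneg (x a b - y a b)]
  calc sqd x y ≤ ∑ _a : Fin d, ∑ _b : Fin n, ρ^2 :=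
        Finset.sum_le_sum fun a _ => Finset.sum_le_sum fun b _ => hb a b
  _ = (d : ℝ) * (n : ℝ) * ρ^2 := by
      simp [Finset.sum_const, Finset.card_univ, nsmul_eq_mul]; ring

lemma dist_le_sqrt_of_sqd_le {d n : ℕ} (x y : MatF d n) {s : ℝ} (h : sqd x y ≤ s) :
    dist x y ≤ Real.sqrt s := by
  rw [dist_pi_le_iff (Real.sqrt_nonneg s)]
  intro a
  rw [dist_pi_le_iff (Real.sqrt_nonneg s)]
  intro b
  rw [Real.dist_eq]
  refine Real.abs_le_sqrt ?_
  refine le_trans ?_ h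
  unfold sqd
  refine le_trans ?_ (Finset.single_le_sum (f := fun a' => ∑ b', (x a' b' - y a' b')^2)
    (fun _ _ => Finset.sum_nonneg fun _ _ => sq_nonneg _) (Finset.mem_univ a))
  exact Finset.single_le_sum (f := fun b' => (x a b' - y a b')^2)
    (fun _ _ => sq_nonneg _) (Finset.mem_univ b)

lemma lin_plus_const_eq_lamGf {d n : ℕ} (lam : ℝ) (q Z : MatF d n) :
    (∑ a, ∑ b, (lam * (2 * q a b)) * Z a b) + (-(lam * ∑ a, ∑ b, (q a b)^2)) = lam * Gf q Z := by
  unfold Gf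
  have h : ∑ a, ∑ b, (lam * (2 * q a b)) * Z a b = lam * ∑ a, ∑ b, 2 * q a b * Z a b := by
    rw [Finset.mul_sum]
    refine Finset.sum_congr rfl fun a _ => ?_
    rw [Finset.mul_sum]
    exact Finset.sum_congr rfl fun b _ => by ring
  rw [h]; ring

lemma ite_sum_mul {d n : ℕ} (P : Prop) [Decidable P] (g : Fin d → Fin n → ℝ) (Z : MatF d n) :
    (∑ a, ∑ b, (if P then g a b else 0) * Z a b) = if P then ∑ a, ∑ b, g a b * Z a b else 0 := by
  split_ifs <;> simp

lemma sum_ite_collapse {W : ℕ} (w : Fin W) (g : Fin W → ℝ) :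
    ∑ w1, (if w1 = w then (1:ℝ) else 0) * g w1 = g w := by
  simp [ite_mul, Finset.sum_ite_eq']

lemma sum_ite_collapse' {W : ℕ} (w : Fin W) (g : Fin W → ℝ) :
    ∑ w2, (if w2 = w then g w2 else 0) = g w := by
  simp [Finset.sum_ite_eq']
/-- Core scalar estimate. -/
lemma core_estimate
    (d n N M : ℕ) (W : ℕ)
    (K : Fin N → MatF d n) (Q : Fin M → MatF d n)
    (F : Fin N → Fin M → Fin d → Fin n → ℝ)
    (fz : Fin d → Fin n → ℝ) (zk zq : MatF d n)
    (θ lam Cc ε B' : ℝ) (hθ : 0 < θ) (hlam : 0 < lam) (hCc : Cc = 4 * lam * θ)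
    (hε : 0 ≤ ε)
    (ii : Fin W → Fin N) (jj : Fin W → Fin M) (cc : Fin W → Fin n)
    (r : Fin d) (c : Fin n)
    (tv : Fin W → ℝ)
    (htv : ∀ w, tv w = lam * Gf (Q (jj w)) zq + (if cc w = c then Cc else 0)
        + lam * Gf (K (ii w)) zk)
    (hgood : ∀ (i : Fin N) (j : Fin M), sqd zk (K i) ≤ 4*θ → sqd zq (Q j) ≤ 4*θ →
        |F i j r c - fz r c| ≤ ε/2)
    (hB' : ∀ (i : Fin N) (j : Fin M) (γ : Fin n), |F i j r γ - fz r c| ≤ B')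
    (wstar : Fin W) (hw1 : sqd zk (K (ii wstar)) ≤ θ) (hw2 : sqd zq (Q (jj wstar)) ≤ θ)
    (hw3 : cc wstar = c)
    (hexp : (W : ℝ) * (Real.exp (-(2*lam*θ)) * B') ≤ ε/2) :
    |(∑ w, F (ii w) (jj w) r (cc w) * (Real.exp (tv w) / ∑ u, Real.exp (tv u)))
      - fz r c| ≤ ε := by
  classical
  set S := ∑ u, Real.exp (tv u) with hSdef
  have hS : 0 < S := Finset.sum_pos (fun u _ => Real.exp_pos _) ⟨wstar, Finset.mem_univ _⟩
  set p : Fin W → ℝ := fun w => Real.exp (tv w) / S with hpdef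
  have hp0 : ∀ w, 0 ≤ p w := fun w => div_nonneg (Real.exp_pos _).le hS.le
  have hpsum : ∑ w, p w = 1 := by
    rw [hpdef, ← Finset.sum_div, ← hSdef, div_self hS.ne']
  have hple : ∀ w, p w ≤ Real.exp (tv w - tv wstar) := by
    intro w
    rw [Real.exp_sub, hpdef]
    have h1 : Real.exp (tv wstar) ≤ S := by
      rw [hSdef]
      exact Finset.single_le_sum (f := fun u => Real.exp (tv u))
        (fun _ _ => (Real.exp_pos _).le) (Finset.mem_univ wstar)
    rw [div_le_div_iff₀ hS (Real.exp_pos _)]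
    exact mul_le_mul_of_nonneg_left h1 (Real.exp_pos _).le
  have hB'0 : 0 ≤ B' := le_trans (abs_nonneg _) (hB' (ii wstar) (jj wstar) c)
  -- gap bound for bad indices
  set good : Fin W → Prop :=
    fun w => cc w = c ∧ sqd zk (K (ii w)) ≤ 4*θ ∧ sqd zq (Q (jj w)) ≤ 4*θ with hgooddef
  have hgap : ∀ w, ¬ good w → tv w - tv wstar ≤ -(2*lam*θ) := by
    intro w hbad
    have e1 : Gf (K (ii w)) zk - Gf (K (ii wstar)) zk
        = sqd zk (K (ii wstar)) - sqd zk (K (ii w)) := Gf_sub _ _ _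
    have e2 : Gf (Q (jj w)) zq - Gf (Q (jj wstar)) zq
        = sqd zq (Q (jj wstar)) - sqd zq (Q (jj w)) := Gf_sub _ _ _
    have s1 : 0 ≤ sqd zk (K (ii w)) := sqd_nonneg _ _
    have s2 : 0 ≤ sqd zq (Q (jj w)) := sqd_nonneg _ _
    rw [htv w, htv wstar, hw3, if_pos rfl]
    by_cases hc : cc w = c
    · rw [if_pos hc]
      rcases lt_or_ge (4*θ) (sqd zk (K (ii w))) with h4 | h4
      · nlinarith
      rcases lt_or_ge (4*θ) (sqd zq (Q (jj w))) with h5 | h5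
      · nlinarith
      · exact absurd (show good w from ⟨hc, h4, h5⟩) hbad
    · rw [if_neg hc]
      nlinarith
  have hpbad : ∀ w, ¬ good w → p w ≤ Real.exp (-(2*lam*θ)) := fun w hw =>
    (hple w).trans (Real.exp_le_exp.mpr (hgap w hw))
  have hw_good : good wstar := by
    refine ⟨hw3, le_trans hw1 (by nlinarith), le_trans hw2 (by nlinarith)⟩
  -- main chain
  have step1 : (∑ w, F (ii w) (jj w) r (cc w) * p w) - fz r c
      = ∑ w, (F (ii w) (jj w) r (cc w) - fz r c) * p w := by
    simp only [sub_mul, Finset.sum_sub_distrib, ← Finset.mul_sum, hpsum, mul_one]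
  rw [show (∑ w, F (ii w) (jj w) r (cc w) * (Real.exp (tv w) / ∑ u, Real.exp (tv u)))
      = ∑ w, F (ii w) (jj w) r (cc w) * p w from rfl]
  rw [step1]
  calc |∑ w, (F (ii w) (jj w) r (cc w) - fz r c) * p w|
      ≤ ∑ w, |(F (ii w) (jj w) r (cc w) - fz r c) * p w| :=
        Finset.abs_sum_le_sum_abs _ _
    _ = ∑ w, |F (ii w) (jj w) r (cc w) - fz r c| * p w := by
        refine Finset.sum_congr rfl fun w _ => ?_
        rw [abs_mul, abs_of_nonneg (hp0 w)]
    _ = (∑ w ∈ Finset.univ.filter good, |F (ii w) (jj w) r (cc w) - fz r c| * p w)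
        + ∑ w ∈ Finset.univ.filter (fun w => ¬ good w),
            |F (ii w) (jj w) r (cc w) - fz r c| * p w :=
        (Finset.sum_filter_add_sum_filter_not _ _ _).symm
    _ ≤ ε/2 + ε/2 := by
        refine add_le_add ?_ ?_
        · calc (∑ w ∈ Finset.univ.filter good, |F (ii w) (jj w) r (cc w) - fz r c| * p w)
              ≤ ∑ w ∈ Finset.univ.filter good, (ε/2) * p w := by
                refine Finset.sum_le_sum fun w hw => ?_
                have hgw := (Finset.mem_filter.mp hw).2
                obtain ⟨h1, h2, h3⟩ := hgw
                refine mul_le_mul_of_nonneg_right ?_ (hp0 w)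
                rw [h1]
                exact hgood _ _ h2 h3
          _ = (ε/2) * ∑ w ∈ Finset.univ.filter good, p w := by rw [Finset.mul_sum]
          _ ≤ (ε/2) * 1 := by
                refine mul_le_mul_of_nonneg_left ?_ (by linarith)
                rw [← hpsum]
                exact Finset.sum_le_sum_of_subset_of_nonneg (Finset.filter_subset _ _)
                  (fun w _ _ => hp0 w)
          _ = ε/2 := mul_one _
        · calc (∑ w ∈ Finset.univ.filter (fun w => ¬ good w),
                |F (ii w) (jj w) r (cc w) - fz r c| * p w)
              ≤ ∑ _w ∈ Finset.univ.filter (fun w => ¬ good w),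
                  Real.exp (-(2*lam*θ)) * B' := by
                refine Finset.sum_le_sum fun w hw => ?_
                have hbw := (Finset.mem_filter.mp hw).2
                calc |F (ii w) (jj w) r (cc w) - fz r c| * p w
                    ≤ B' * Real.exp (-(2*lam*θ)) :=
                      mul_le_mul (hB' _ _ _) (hpbad w hbw) (hp0 w) hB'0
                  _ = Real.exp (-(2*lam*θ)) * B' := mul_comm _ _
          _ = ((Finset.univ.filter (fun w => ¬ good w)).card : ℝ)
                * (Real.exp (-(2*lam*θ)) * B') := by
                rw [Finset.sum_const, nsmul_eq_mul]
          _ ≤ (W : ℝ) * (Real.exp (-(2*lam*θ)) * B') := by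
                refine mul_le_mul_of_nonneg_right ?_
                  (mul_nonneg (Real.exp_pos _).le hB'0)
                have hcard : (Finset.univ.filter (fun w => ¬ good w)).card ≤ W :=
                  le_trans (Finset.card_filter_le _ _) (by simp)
                exact Nat.cast_le.mpr hcard
          _ ≤ ε/2 := hexp
    _ = ε := by ring
lemma exists_sum_linear (d n M₁ M₂ : ℕ) (co : Fin M₁ → Fin M₂ → Fin d → Fin n → ℝ) :
    ∃ (H : ℕ) (P : Fin H → Matrix (Fin M₁) (Fin d) ℝ) (Q : Fin H → Matrix (Fin n) (Fin M₂) ℝ),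
      ∀ Z : Matrix (Fin d) (Fin n) ℝ,
        (∑ h, P h * Z * Q h) = Matrix.of (fun α β => ∑ a, ∑ b, co α β a b * Z a b) := by
  refine ⟨M₁ * d,
    fun h => Matrix.single (finProdFinEquiv.symm h).1 (finProdFinEquiv.symm h).2 (1:ℝ),
    fun h => Matrix.of (fun b β => co (finProdFinEquiv.symm h).1 β (finProdFinEquiv.symm h).2 b),
    fun Z => ?_⟩
  ext α β
  rw [Matrix.sum_apply]
  refine (Fintype.sum_equiv (finProdFinEquiv.symm)
    (fun h : Fin (M₁ * d) => (Matrix.single (finProdFinEquiv.symm h).1 (finProdFinEquiv.symm h).2 (1:ℝ) * Z *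
      Matrix.of (fun b β => co (finProdFinEquiv.symm h).1 β (finProdFinEquiv.symm h).2 b)) α β)
    (fun p : Fin M₁ × Fin d => (Matrix.single p.1 p.2 (1:ℝ) * Z *
      Matrix.of (fun b β => co p.1 β p.2 b)) α β)
    (fun x => rfl)).trans ?_
  rw [Fintype.sum_prod_type]
  simp only [Matrix.mul_apply, Matrix.single, Matrix.of_apply]
  simp only [ite_mul, one_mul, zero_mul]
  rw [Finset.sum_comm]
  refine Finset.sum_congr rfl fun a _ => ?_
  refine (Finset.sum_eq_single α (fun b _ hb => by simp [hb]) (by simp)).trans ?_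
  simp [mul_comm]

/-- **`L∞`-norm universal approximation by single-layer, single-head cross-attention.**
For compact `U_K, U_Q ⊂ ℝ^{d×n}`, continuous `f : U_K × U_Q → ℝ^{d×n}`, and `ε > 0`,
there exist two sum-of-linear-transformations layers `Linear_K, Linear_Q` and a
single-head cross-attention layer with weights `W_K, W_Q, W_V, W_O` such that for all
`Z_K ∈ U_K`, `Z_Q ∈ U_Q`,
`‖W_V·Linear_K(Z_K)·Softmax((W_K·Linear_K(Z_K))ᵀ·(W_Q·Linear_Q(Z_Q)))·W_O − f(Z_K,Z_Q)‖_∞ ≤ ε`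
(maximum absolute entry). -/
theorem crossattention_universal_approximation_Linf
    (d n : ℕ) (hd : 0 < d) (hn : 0 < n)
    (UK UQ : Set (Matrix (Fin d) (Fin n) ℝ)) (hUK : IsCompact UK) (hUQ : IsCompact UQ)
    (f : Matrix (Fin d) (Fin n) ℝ → Matrix (Fin d) (Fin n) ℝ → Matrix (Fin d) (Fin n) ℝ)
    (hf : ContinuousOn (fun p : Matrix (Fin d) (Fin n) ℝ × Matrix (Fin d) (Fin n) ℝ =>
      f p.1 p.2) (UK ×ˢ UQ))
    (ε : ℝ) (hε : 0 < ε) :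
    ∃ (M₁ M₂ M₁' M₂' : ℕ)
      (HK : ℕ) (PK : Fin HK → Matrix (Fin M₁) (Fin d) ℝ)
      (QK : Fin HK → Matrix (Fin n) (Fin M₂) ℝ)
      (RbK : Matrix (Fin M₁) (Fin M₂) ℝ)
      (HQ : ℕ) (PQ : Fin HQ → Matrix (Fin M₁') (Fin d) ℝ)
      (QQ : Fin HQ → Matrix (Fin n) (Fin M₂') ℝ)
      (RbQ : Matrix (Fin M₁') (Fin M₂') ℝ)
      (dA : ℕ) (WK : Matrix (Fin dA) (Fin M₁) ℝ) (WQ : Matrix (Fin dA) (Fin M₁') ℝ)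
      (WV : Matrix (Fin d) (Fin M₁) ℝ)
      (WO : Matrix (Fin M₂') (Fin n) ℝ),
      ∀ ZK ∈ UK, ∀ ZQ ∈ UQ, ∀ (r : Fin d) (c : Fin n),
        |(WV * (∑ i, PK i * ZK * QK i + RbK) *
            softmax ((WK * (∑ i, PK i * ZK * QK i + RbK))ᵀ *
              (WQ * (∑ i, PQ i * ZQ * QQ i + RbQ))) * WO) r c
          - f ZK ZQ r c| ≤ ε := by
  classical
  -- trivial cases: empty domains
  rcases UK.eq_empty_or_nonempty with hUKe | ⟨ZK0, hZK0⟩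
  · exact ⟨0, 0, 0, 0, 0, fun _ => 0, fun _ => 0, 0, 0, fun _ => 0, fun _ => 0, 0, 0, 0, 0, 0, 0,
      fun ZK hZK => absurd hZK (by simp [hUKe])⟩
  rcases UQ.eq_empty_or_nonempty with hUQe | ⟨ZQ0, hZQ0⟩
  · exact ⟨0, 0, 0, 0, 0, fun _ => 0, fun _ => 0, 0, 0, fun _ => 0, fun _ => 0, 0, 0, 0, 0, 0, 0,
      fun ZK hZK ZQ hZQ => absurd hZQ (by simp [hUQe])⟩
  -- view the sets in the pi-type metric space
  let UK' : Set (MatF d n) := UK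
  let UQ' : Set (MatF d n) := UQ
  -- uniform continuity
  obtain ⟨δ₀, hδ₀pos, hδ₀⟩ : ∃ δ > 0, ∀ x ∈ UK', ∀ y ∈ UQ', ∀ x' ∈ UK', ∀ y' ∈ UQ',
      dist x x' < δ → dist y y' < δ → ∀ (r : Fin d) (c : Fin n),
        |f x y r c - f x' y' r c| ≤ ε/2 := by
    have hcomp : IsCompact (UK' ×ˢ UQ') := (hUK.prod hUQ : _)
    have huc : @UniformContinuousOn (MatF d n × MatF d n) (MatF d n)
        (@PseudoMetricSpace.toUniformSpace _ (by infer_instance))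
        (@PseudoMetricSpace.toUniformSpace _ (by infer_instance))
        (fun p : MatF d n × MatF d n => (f p.1 p.2 : MatF d n)) (UK' ×ˢ UQ') :=
      IsCompact.uniformContinuousOn_of_continuous hcomp hf
    obtain ⟨δ, hδ, hduc⟩ := Metric.uniformContinuousOn_iff.mp huc (ε/2) (by linarith)
    refine ⟨δ, hδ, fun x hx y hy x' hx' y' hy' h1 h2 r c => ?_⟩
    have hkey := hduc (x, y) ⟨hx, hy⟩ (x', y') ⟨hx', hy'⟩
      (by rw [Prod.dist_eq]; exact max_lt h1 h2)
    have e1 : dist (f x y r c) (f x' y' r c) ≤ dist (f x y r) (f x' y' r) :=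
      dist_le_pi_dist (f x y r) (f x' y' r) c
    have e2 := dist_le_pi_dist (X := fun _ : Fin d => Fin n → ℝ) (f x y) (f x' y') r
    have := le_trans e1 e2
    rw [Real.dist_eq] at this
    exact le_trans this (le_of_lt (lt_of_le_of_lt (le_refl _) (by exact hkey)))
  -- net radius
  set s : ℝ := Real.sqrt ((d:ℝ) * (n:ℝ)) with hsdef
  have hs0 : 0 ≤ s := Real.sqrt_nonneg _
  have hs2 : s^2 = (d:ℝ) * (n:ℝ) := Real.sq_sqrt (by positivity)
  set r₀ : ℝ := δ₀ / (2 * (s + 1)) with hr₀def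
  have hr₀ : 0 < r₀ := by
    rw [hr₀def]
    apply div_pos hδ₀pos
    nlinarith
  -- finite nets inside the sets
  have hnet : ∀ (U : Set (MatF d n)), IsCompact U →
      ∃ (N : ℕ) (K : Fin N → MatF d n), (∀ i, K i ∈ U) ∧
        (∀ x ∈ U, ∃ i, dist x (K i) < r₀) := by
    intro U hU
    obtain ⟨t, hts, htf, htcov⟩ :=
      totallyBounded_iff_subset.mp hU.totallyBounded _ (Metric.dist_mem_uniformity hr₀)
    refine ⟨htf.toFinset.card,
      fun i => ((htf.toFinset.equivFin.symm i : htf.toFinset) : MatF d n),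
      fun i => hts (htf.mem_toFinset.mp (htf.toFinset.equivFin.symm i).2),
      fun x hx => ?_⟩
    obtain ⟨y, hyt, hyd⟩ := Set.mem_iUnion₂.mp (htcov hx)
    refine ⟨htf.toFinset.equivFin ⟨y, htf.mem_toFinset.mpr hyt⟩, ?_⟩
    show dist x ((htf.toFinset.equivFin.symm (htf.toFinset.equivFin
      ⟨y, htf.mem_toFinset.mpr hyt⟩) : htf.toFinset) : MatF d n) < r₀
    rw [Equiv.symm_apply_apply]
    exact hyd
  obtain ⟨N, K, hKmem, hKcov⟩ := hnet UK' (hUK : _)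
  obtain ⟨M, Q, hQmem, hQcov⟩ := hnet UQ' (hUQ : _)
  have hN : 0 < N := by obtain ⟨i, -⟩ := hKcov ZK0 hZK0; exact i.pos
  have hM : 0 < M := by obtain ⟨j, -⟩ := hQcov ZQ0 hZQ0; exact j.pos
  -- index bookkeeping
  obtain ⟨W, hW0, ii, jj, cc, hsurj⟩ : ∃ (W : ℕ), 0 < W ∧
      ∃ (ii : Fin W → Fin N) (jj : Fin W → Fin M) (cc : Fin W → Fin n),
        ∀ i j γ, ∃ w, ii w = i ∧ jj w = j ∧ cc w = γ := by
    refine ⟨N * M * n, Nat.mul_pos (Nat.mul_pos hN hM) hn, ?_⟩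
    let E : ((Fin N × Fin M) × Fin n) ≃ Fin (N * M * n) :=
      (finProdFinEquiv.prodCongr (Equiv.refl (Fin n))).trans finProdFinEquiv
    exact ⟨fun w => ((E.symm w).1).1, fun w => ((E.symm w).1).2, fun w => (E.symm w).2,
      fun i j γ => ⟨E ((i, j), γ), by simp⟩⟩
  -- scalar constants
  set θ : ℝ := (d:ℝ) * (n:ℝ) * r₀^2 with hθdef
  have hθ : 0 < θ := by
    rw [hθdef]
    have : (0:ℝ) < (d:ℝ) := by exact_mod_cast hd
    have : (0:ℝ) < (n:ℝ) := by exact_mod_cast hn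
    positivity
  have h4θ : Real.sqrt (4 * θ) < δ₀ := by
    rw [Real.sqrt_lt' hδ₀pos]
    have heq : 4 * θ = (4 * s^2 * δ₀^2) / (2 * (s + 1))^2 := by
      rw [hθdef, hr₀def, ← hs2, div_pow]
      field_simp
    rw [heq, div_lt_iff₀ (by positivity)]
    nlinarith [hδ₀pos, hs0]
  obtain ⟨B, hB1, hB⟩ : ∃ B : ℝ, 1 ≤ B ∧
      ∀ (i : Fin N) (j : Fin M) (ρ : Fin d) (γ : Fin n), |f (K i) (Q j) ρ γ| ≤ B := by
    refine ⟨1 + ∑ p : (Fin N × Fin M) × Fin d × Fin n,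
      |f (K p.1.1) (Q p.1.2) p.2.1 p.2.2|,
      le_add_of_nonneg_right (Finset.sum_nonneg fun _ _ => abs_nonneg _),
      fun i j ρ γ => ?_⟩
    have h1 := Finset.single_le_sum
      (f := fun p : (Fin N × Fin M) × Fin d × Fin n => |f (K p.1.1) (Q p.1.2) p.2.1 p.2.2|)
      (fun _ _ => abs_nonneg _) (Finset.mem_univ ((i, j), (ρ, γ)))
    simp only at h1
    linarith
  set B' : ℝ := 2 * B + ε with hB'def
  have hB'0 : 0 < B' := by rw [hB'def]; linarith
  set X : ℝ := ε / (2 * (W:ℝ) * B') with hXdef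
  have hX : 0 < X := by
    rw [hXdef]
    apply div_pos hε
    have : (0:ℝ) < (W:ℝ) := by exact_mod_cast hW0
    positivity
  obtain ⟨lam, hlam, hexpX⟩ : ∃ lam : ℝ, 0 < lam ∧ Real.exp (-(2 * lam * θ)) ≤ X := by
    refine ⟨max 1 ((-Real.log X) / (2 * θ)), lt_of_lt_of_le one_pos (le_max_left _ _), ?_⟩
    have h1 : (-Real.log X) / (2 * θ) ≤ max 1 ((-Real.log X) / (2 * θ)) := le_max_right _ _
    have h2 : -Real.log X ≤ max 1 ((-Real.log X) / (2 * θ)) * (2 * θ) :=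
      (div_le_iff₀ (by linarith)).mp h1
    calc Real.exp (-(2 * max 1 ((-Real.log X) / (2 * θ)) * θ))
        ≤ Real.exp (Real.log X) := Real.exp_le_exp.mpr (by linarith)
      _ = X := Real.exp_log hX
  set Cc : ℝ := 4 * lam * θ with hCc
  -- weight matrices and linear-layer coefficients
  set WKm : Matrix (Fin (W + W)) (Fin ((W + W) + d)) ℝ :=
    Matrix.of (fun κ α => if α = Fin.castAdd d κ then (1:ℝ) else 0) with hWKm
  set WVm : Matrix (Fin d) (Fin ((W + W) + d)) ℝ :=
    Matrix.of (fun ρ α => if α = Fin.natAdd (W + W) ρ then (1:ℝ) else 0) with hWVm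
  set cK : Fin ((W + W) + d) → Fin W → Fin d → Fin n → ℝ :=
    fun α w a b => Fin.addCases
      (fun κ => Fin.addCases (fun _w1 => (0:ℝ))
        (fun w2 => if w2 = w then lam * (2 * K (ii w) a b) else 0) κ)
      (fun _ρ => (0:ℝ)) α with hcK
  set RbK : Matrix (Fin ((W + W) + d)) (Fin W) ℝ :=
    Matrix.of (fun α w => Fin.addCases
      (fun κ => Fin.addCases (fun w1 => if w1 = w then (1:ℝ) else 0)
        (fun w2 => if w2 = w then -(lam * ∑ a, ∑ b, (K (ii w) a b)^2) else 0) κ)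
      (fun ρ => f (K (ii w)) (Q (jj w)) ρ (cc w)) α) with hRbK
  set cQ : Fin (W + W) → Fin n → Fin d → Fin n → ℝ :=
    fun κ γ a b => Fin.addCases (fun w1 => lam * (2 * Q (jj w1) a b)) (fun _w2 => (0:ℝ)) κ
      with hcQ
  set RbQ : Matrix (Fin (W + W)) (Fin n) ℝ :=
    Matrix.of (fun κ γ => Fin.addCases
      (fun w1 => -(lam * ∑ a, ∑ b, (Q (jj w1) a b)^2) + (if cc w1 = γ then Cc else 0))
      (fun _w2 => (1:ℝ)) κ) with hRbQ
  obtain ⟨HK, PK, QK, hPK⟩ := exists_sum_linear d n ((W + W) + d) W cK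
  obtain ⟨HQ, PQ, QQ, hPQ⟩ := exists_sum_linear d n (W + W) n cQ
  refine ⟨(W + W) + d, W, W + W, n, HK, PK, QK, RbK, HQ, PQ, QQ, RbQ,
    W + W, WKm, 1, WVm, 1, ?_⟩
  intro ZK hZK ZQ hZQ r c
  rw [hPK ZK, hPQ ZQ]
  set LKterm : Matrix (Fin ((W + W) + d)) (Fin W) ℝ :=
    Matrix.of (fun α β => ∑ a, ∑ b, cK α β a b * ZK a b) + RbK with hLKterm
  set LQterm : Matrix (Fin (W + W)) (Fin n) ℝ :=
    Matrix.of (fun α β => ∑ a, ∑ b, cQ α β a b * ZQ a b) + RbQ with hLQterm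
  -- entry computations
  have hLK1 : ∀ (w1 w : Fin W),
      LKterm (Fin.castAdd d (Fin.castAdd W w1)) w = if w1 = w then (1:ℝ) else 0 := by
    intro w1 w
    rw [hLKterm]
    simp only [Matrix.add_apply, Matrix.of_apply, hcK, hRbK, Fin.addCases_left]
    simp
  have hLK2 : ∀ (w2 w : Fin W),
      LKterm (Fin.castAdd d (Fin.natAdd W w2)) w
        = if w2 = w then lam * Gf (K (ii w)) ZK else 0 := by
    intro w2 w
    rw [hLKterm]
    simp only [Matrix.add_apply, Matrix.of_apply, hcK, hRbK, Fin.addCases_left,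
      Fin.addCases_right]
    split_ifs with h
    · exact lin_plus_const_eq_lamGf lam (K (ii w)) ZK
    · simp
  have hLQ1 : ∀ (w1 : Fin W) (γ : Fin n),
      LQterm (Fin.castAdd W w1) γ
        = lam * Gf (Q (jj w1)) ZQ + (if cc w1 = γ then Cc else 0) := by
    intro w1 γ
    rw [hLQterm]
    simp only [Matrix.add_apply, Matrix.of_apply, hcQ, hRbQ, Fin.addCases_left]
    rw [← lin_plus_const_eq_lamGf lam (Q (jj w1)) ZQ]
    ring
  have hLQ2 : ∀ (w2 : Fin W) (γ : Fin n), LQterm (Fin.natAdd W w2) γ = 1 := by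
    intro w2 γ
    rw [hLQterm]
    simp only [Matrix.add_apply, Matrix.of_apply, hcQ, hRbQ, Fin.addCases_right]
    simp
  have hVmat : WVm * LKterm
      = Matrix.of (fun ρ w => f (K (ii w)) (Q (jj w)) ρ (cc w)) := by
    ext ρ w
    rw [Matrix.mul_apply]
    simp only [hWVm, Matrix.of_apply, ite_mul, one_mul, zero_mul, Finset.sum_ite_eq',
      Finset.mem_univ, if_true]
    rw [hLKterm]
    simp only [Matrix.add_apply, Matrix.of_apply, hcK, hRbK, Fin.addCases_right]
    simp
  have hTmat : (WKm * LKterm)ᵀ * ((1 : Matrix (Fin (W + W)) (Fin (W + W)) ℝ) * LQterm)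
      = Matrix.of (fun w γ => lam * Gf (Q (jj w)) ZQ + (if cc w = γ then Cc else 0)
          + lam * Gf (K (ii w)) ZK) := by
    rw [Matrix.one_mul]
    ext w γ
    rw [Matrix.mul_apply]
    simp only [Matrix.transpose_apply]
    have hK1 : ∀ κ : Fin (W + W), (WKm * LKterm) κ w = LKterm (Fin.castAdd d κ) w := by
      intro κ
      rw [Matrix.mul_apply]
      simp only [hWKm, Matrix.of_apply, ite_mul, one_mul, zero_mul, Finset.sum_ite_eq',
        Finset.mem_univ, if_true]
    calc (∑ κ, (WKm * LKterm) κ w * LQterm κ γ)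
        = ∑ κ : Fin (W + W), LKterm (Fin.castAdd d κ) w * LQterm κ γ :=
          Finset.sum_congr rfl fun κ _ => by rw [hK1]
      _ = (∑ w1 : Fin W, LKterm (Fin.castAdd d (Fin.castAdd W w1)) w
            * LQterm (Fin.castAdd W w1) γ)
          + ∑ w2 : Fin W, LKterm (Fin.castAdd d (Fin.natAdd W w2)) w
            * LQterm (Fin.natAdd W w2) γ :=
          Fin.sum_univ_add _
      _ = (∑ w1 : Fin W, (if w1 = w then (1:ℝ) else 0)
            * (lam * Gf (Q (jj w1)) ZQ + (if cc w1 = γ then Cc else 0)))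
          + ∑ w2 : Fin W, (if w2 = w then lam * Gf (K (ii w)) ZK else 0) * 1 := by
          refine congrArg₂ (· + ·) ?_ ?_
          · exact Finset.sum_congr rfl fun w1 _ => by rw [hLK1, hLQ1]
          · exact Finset.sum_congr rfl fun w2 _ => by rw [hLK2, hLQ2]
      _ = Matrix.of (fun w γ => lam * Gf (Q (jj w)) ZQ + (if cc w = γ then Cc else 0)
            + lam * Gf (K (ii w)) ZK) w γ := by
          rw [sum_ite_collapse w
            (fun w1 => lam * Gf (Q (jj w1)) ZQ + (if cc w1 = γ then Cc else 0))]
          simp only [mul_one]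
          rw [sum_ite_collapse' w (fun _ => lam * Gf (K (ii w)) ZK)]
          simp
  rw [hVmat, hTmat, Matrix.mul_one, Matrix.mul_apply]
  simp only [softmax, Matrix.of_apply]
  -- analytic facts for the core estimate
  have hgood' : ∀ (i : Fin N) (j : Fin M), sqd ZK (K i) ≤ 4 * θ → sqd ZQ (Q j) ≤ 4 * θ →
      |f (K i) (Q j) r c - f ZK ZQ r c| ≤ ε / 2 := by
    intro i j h1 h2
    have d1 := lt_of_le_of_lt (dist_le_sqrt_of_sqd_le ZK (K i) h1) h4θ
    have d2 := lt_of_le_of_lt (dist_le_sqrt_of_sqd_le ZQ (Q j) h2) h4θ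
    have := hδ₀ (K i) (hKmem i) (Q j) (hQmem j) ZK hZK ZQ hZQ
      ((dist_comm _ _).trans_lt d1) ((dist_comm _ _).trans_lt d2) r c
    calc |f (K i) (Q j) r c - f ZK ZQ r c|
        = |f (K i) (Q j) r c - f ZK ZQ r c| := rfl
      _ ≤ ε / 2 := this
  obtain ⟨i₀, hi₀⟩ := hKcov ZK hZK
  obtain ⟨j₀, hj₀⟩ := hQcov ZQ hZQ
  obtain ⟨w₀, hwi, hwj, hwc⟩ := hsurj i₀ j₀ c
  have hw1 : sqd ZK (K (ii w₀)) ≤ θ := by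
    rw [hwi, hθdef]
    exact sqd_le_of_dist_le _ _ hi₀.le hr₀.le
  have hw2 : sqd ZQ (Q (jj w₀)) ≤ θ := by
    rw [hwj, hθdef]
    exact sqd_le_of_dist_le _ _ hj₀.le hr₀.le
  have hfzB : |f ZK ZQ r c| ≤ B + ε / 2 := by
    have hr₀δ : r₀ < δ₀ := by
      rw [hr₀def]
      exact div_lt_self hδ₀pos (by nlinarith)
    have h1 := hδ₀ ZK hZK ZQ hZQ (K i₀) (hKmem i₀) (Q j₀) (hQmem j₀)
      (hi₀.trans hr₀δ) (hj₀.trans hr₀δ) r c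
    have h2 := hB i₀ j₀ r c
    have habs : ∀ a b : ℝ, |a| ≤ |a - b| + |b| := fun a b => by
      calc |a| = |(a - b) + b| := by ring_nf
        _ ≤ |a - b| + |b| := abs_add_le _ _
    linarith [habs (f ZK ZQ r c) (f (K i₀) (Q j₀) r c)]
  have hB'' : ∀ (i : Fin N) (j : Fin M) (γ : Fin n),
      |f (K i) (Q j) r γ - f ZK ZQ r c| ≤ B' := by
    intro i j γ
    have h1 := hB i j r γ
    have habs : ∀ a b : ℝ, |a - b| ≤ |a| + |b| := fun a b => by
      rw [sub_eq_add_neg]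
      exact le_trans (abs_add_le _ _) (by rw [abs_neg])
    rw [hB'def]
    have := habs (f (K i) (Q j) r γ) (f ZK ZQ r c)
    linarith
  have hexpfin : (W : ℝ) * (Real.exp (-(2 * lam * θ)) * B') ≤ ε / 2 := by
    have h1 : Real.exp (-(2 * lam * θ)) * B' ≤ X * B' :=
      mul_le_mul_of_nonneg_right hexpX hB'0.le
    have hWpos : (0:ℝ) < (W:ℝ) := by exact_mod_cast hW0
    have h2 : (W : ℝ) * (X * B') = ε / 2 := by
      rw [hXdef]
      field_simp
    calc (W : ℝ) * (Real.exp (-(2 * lam * θ)) * B')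
        ≤ (W : ℝ) * (X * B') := mul_le_mul_of_nonneg_left h1 hWpos.le
      _ = ε / 2 := h2
  exact core_estimate d n N M W K Q (fun i j ρ γ => f (K i) (Q j) ρ γ)
    (fun ρ γ => f ZK ZQ ρ γ) ZK ZQ θ lam Cc ε B' hθ hlam hCc hε.le ii jj cc r c
    (fun w => lam * Gf (Q (jj w)) ZQ + (if cc w = c then Cc else 0)
      + lam * Gf (K (ii w)) ZK)
    (fun w => rfl) hgood' hB'' w₀ hw1 hw2 hwc hexpfin
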